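/- Let δ > 0 and define the doubled smoothed ramp loss L : ℝ → ℝ by L(u) = 0 for u ≤ −δ, L(u) = (1 + u/δ)² for −δ < u ≤ 0, L(u) = 2 − (1 − u/δ)² for 0 < u < δ, and L(u) = 2 for u ≥ δ; define sign(t) = 1 if t ≥ 0 and sign(t) = −1 if t < 0. Let (Ω, ℱ, P) be a probability space, 𝒳 a measurable space, X : Ω → 𝒳 measurable, A : Ω → {−1, 1} a random variable, Y : Ω → ℝ a random variable with 0 ≤ Y ≤ h almost surely for some h > 0, and Δ : Ω → {0, 1} a random variable. Let π : {−1,1} × 𝒳 → ℝ be measurable with η ≤ π(a, x) ≤ 1 for all (a, x) and some η > 0, such that for each a ∈ {−1, 1}, ω ↦ π(a, X(ω)) is a version of P(A = a ∣ σ(X)). Let S̃ : ℝ × 𝒳 × {−1,1} → ℝ be measurable with η_C ≤ S̃ ≤ 1 for some η_C > 0, and fix γ ∈ (0,1). Define V'_L(f, α) and V'(d, α) as in the CVaR criterion: V'_L(f, α) = E[(αγ − Δ·(α − Y)·1{Y ≤ α}/S̃(Y, X, A)) · L(A·f(X))/π(A, X)] and V'(d, α) = E[(αγ − Δ·(α −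 Y)·1{Y ≤ α}/S̃(Y, X, A)) · 1{A = d(X)}/π(A, X)]. Suppose a measurable f̃ : 𝒳 → ℝ and α̃ ∈ ℝ satisfy V'_L(f̃, α̃) ≥ V'_L(f, α) for every measurable f and every α ∈ ℝ. Then for every measurable f : 𝒳 → ℝ and every α ∈ ℝ, sup over measurable f′ : 𝒳 → ℝ and α′ ∈ ℝ of V'(sign∘f′, α′), minus V'(sign∘f, α), is at most V'_L(f̃, α̃) − V'_L(f, α). -/

import Mathlib

open MeasureTheory

/-- The doubled smoothed ramp loss: `L(u) = 0` for `u ≤ -δ`, `(1+u/δ)²` for `-δ < u ≤ 0`,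
`2 - (1-u/δ)²` for `0 < u < δ`, and `2` for `u ≥ δ`. -/
noncomputable def rampL (δ u : ℝ) : ℝ :=
  if u ≤ -δ then 0
  else if u ≤ 0 then (1 + u / δ) ^ 2
  else if u < δ then 2 - (1 - u / δ) ^ 2
  else 2

/-- `sgn t = 1` if `t ≥ 0` and `-1` if `t < 0`. -/
noncomputable def sgn (t : ℝ) : ℝ := if 0 ≤ t then 1 else -1

/-- Surrogate CVaR-criterion value
`V'_L(f, α) = E[(αγ - Δ(α-Y)1{Y≤α}/S̃(Y,X,A)) · L(A f(X)) / π(A,X)]`. -/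
noncomputable def VLcvar {Ω 𝒳 : Type*} [MeasurableSpace Ω] [MeasurableSpace 𝒳]
    (P : Measure Ω) (X : Ω → 𝒳) (A Y Δc : Ω → ℝ) (S : ℝ × 𝒳 × ℝ → ℝ) (π : ℝ × 𝒳 → ℝ)
    (γ δ : ℝ) (f : 𝒳 → ℝ) (α : ℝ) : ℝ :=
  ∫ ω, (α * γ - Δc ω * (α - Y ω) * (if Y ω ≤ α then (1 : ℝ) else 0) / S (Y ω, X ω, A ω))
      * rampL δ (A ω * f (X ω)) / π (A ω, X ω) ∂P

/-- CVaR-criterion value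
`V'(d, α) = E[(αγ - Δ(α-Y)1{Y≤α}/S̃(Y,X,A)) · 1{A = d(X)} / π(A,X)]`. -/
noncomputable def Vcvar {Ω 𝒳 : Type*} [MeasurableSpace Ω] [MeasurableSpace 𝒳]
    (P : Measure Ω) (X : Ω → 𝒳) (A Y Δc : Ω → ℝ) (S : ℝ × 𝒳 × ℝ → ℝ) (π : ℝ × 𝒳 → ℝ)
    (γ : ℝ) (d : 𝒳 → ℝ) (α : ℝ) : ℝ :=
  ∫ ω, (α * γ - Δc ω * (α - Y ω) * (if Y ω ≤ α then (1 : ℝ) else 0) / S (Y ω, X ω, A ω))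
      * (if A ω = d (X ω) then (1 : ℝ) else 0) / π (A ω, X ω) ∂P

lemma rampL_of_le {δ u : ℝ} (h : u ≤ -δ) : rampL δ u = 0 := if_pos h

lemma rampL_of_ge {δ u : ℝ} (hδ : 0 < δ) (h : δ ≤ u) : rampL δ u = 2 := by
  rw [rampL, if_neg (by linarith), if_neg (by linarith), if_neg (by linarith)]

lemma rampL_mid1 {δ u : ℝ} (h1 : -δ < u) (h2 : u ≤ 0) : rampL δ u = (1 + u / δ) ^ 2 := by
  rw [rampL, if_neg (by linarith), if_pos h2]

lemma rampL_mid2 {δ u : ℝ} (h1 : 0 < u) (h2 : u < δ) : rampL δ u = 2 - (1 - u / δ) ^ 2 := by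
  rw [rampL, if_neg (by linarith), if_neg (by linarith), if_pos h2]

lemma rampL_nonneg {δ : ℝ} (hδ : 0 < δ) (u : ℝ) : 0 ≤ rampL δ u := by
  rcases le_or_gt u (-δ) with h | h
  · rw [rampL_of_le h]
  · rcases le_or_gt u 0 with h2 | h2
    · rw [rampL_mid1 h h2]; positivity
    · rcases lt_or_ge u δ with h3 | h3
      · rw [rampL_mid2 h2 h3]
        have h4 : 0 < u / δ := div_pos h2 hδ
        have h5 : u / δ < 1 := (div_lt_one hδ).2 h3
        nlinarith
      · rw [rampL_of_ge hδ h3]; norm_num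

lemma rampL_le_two {δ : ℝ} (hδ : 0 < δ) (u : ℝ) : rampL δ u ≤ 2 := by
  rcases le_or_gt u (-δ) with h | h
  · rw [rampL_of_le h]; norm_num
  · rcases le_or_gt u 0 with h2 | h2
    · rw [rampL_mid1 h h2]
      have h4 : -1 < u / δ := by rw [lt_div_iff₀ hδ]; linarith
      have h5 : u / δ ≤ 0 := div_nonpos_iff.2 (Or.inr ⟨h2, hδ.le⟩)
      nlinarith
    · rcases lt_or_ge u δ with h3 | h3
      · rw [rampL_mid2 h2 h3]; nlinarith [sq_nonneg (1 - u / δ)]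
      · rw [rampL_of_ge hδ h3]

lemma rampL_neg {δ : ℝ} (hδ : 0 < δ) (u : ℝ) : rampL δ (-u) = 2 - rampL δ u := by
  by_cases hu0 : u = 0
  · subst hu0
    rw [neg_zero, rampL_mid1 (by linarith) le_rfl]
    norm_num
  rcases le_or_gt u (-δ) with h | h
  · rw [rampL_of_le h, rampL_of_ge hδ (by linarith)]; norm_num
  rcases lt_or_ge u 0 with h2 | h2
  · rw [rampL_mid1 h h2.le, rampL_mid2 (by linarith) (by linarith)]
    ring
  rcases lt_or_ge u δ with h3 | h3
  · have h2' : 0 < u := h2.lt_of_ne (Ne.symm hu0)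
    rw [rampL_mid2 h2' h3, rampL_mid1 (by linarith) (by linarith)]
    ring
  · rw [rampL_of_ge hδ h3, rampL_of_le (by linarith : -u ≤ -δ)]
    norm_num

lemma rampL_one_le {δ : ℝ} (hδ : 0 < δ) {u : ℝ} (hu : 0 ≤ u) : 1 ≤ rampL δ u := by
  rcases eq_or_lt_of_le hu with he | hlt
  · rw [← he, rampL_mid1 (by linarith) le_rfl]; norm_num
  rcases lt_or_ge u δ with h3 | h3
  · rw [rampL_mid2 hlt h3]
    have h4 : 0 < u / δ := div_pos hlt hδ
    have h5 : u / δ < 1 := (div_lt_one hδ).2 h3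
    nlinarith
  · rw [rampL_of_ge hδ h3]; norm_num

lemma measurable_rampL {δ : ℝ} : Measurable (rampL δ) := by
  unfold rampL
  refine Measurable.ite (measurableSet_le measurable_id measurable_const) measurable_const ?_
  refine Measurable.ite (measurableSet_le measurable_id measurable_const) (by measurability) ?_
  exact Measurable.ite (measurableSet_lt measurable_id measurable_const) (by measurability)
    measurable_const

lemma measurable_sgn : Measurable sgn := by
  unfold sgn
  exact Measurable.ite (measurableSet_le measurable_const measurable_id) measurable_const
    measurable_const

lemma sgn_cases (t : ℝ) : sgn t = 1 ∨ sgn t = -1 := by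
  unfold sgn; split_ifs <;> simp

lemma key_ineq {δ : ℝ} (hδ : 0 < δ) (u k1 k2 : ℝ) :
    rampL δ u * k1 + rampL δ (-u) * k2
      - ((if sgn u = 1 then (1:ℝ) else 0) * k1 + (if sgn u = -1 then (1:ℝ) else 0) * k2)
      ≤ max k1 k2 := by
  have hneg := rampL_neg hδ u
  have h0 := rampL_nonneg hδ u
  have h2 := rampL_le_two hδ u
  have hm1 : k1 ≤ max k1 k2 := le_max_left _ _
  have hm2 : k2 ≤ max k1 k2 := le_max_right _ _
  rcases le_or_gt 0 u with hu | hu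
  · have h1le := rampL_one_le hδ hu
    have hs : sgn u = 1 := if_pos hu
    rw [hneg, hs]
    rw [if_pos rfl, if_neg (by norm_num)]
    have e1 : (rampL δ u - 1) * k1 ≤ (rampL δ u - 1) * max k1 k2 :=
      mul_le_mul_of_nonneg_left hm1 (by linarith)
    have e2 : (2 - rampL δ u) * k2 ≤ (2 - rampL δ u) * max k1 k2 :=
      mul_le_mul_of_nonneg_left hm2 (by linarith)
    nlinarith
  · have hle1 : rampL δ u ≤ 1 := by
      have := rampL_one_le hδ (by linarith : (0:ℝ) ≤ -u)
      rw [rampL_neg hδ u] at this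
      linarith
    have hs : sgn u = -1 := if_neg (by linarith)
    rw [hneg, hs]
    rw [if_neg (by norm_num), if_pos rfl]
    have e1 : rampL δ u * k1 ≤ rampL δ u * max k1 k2 :=
      mul_le_mul_of_nonneg_left hm1 h0
    have e2 : (1 - rampL δ u) * k2 ≤ (1 - rampL δ u) * max k1 k2 :=
      mul_le_mul_of_nonneg_left hm2 (by linarith)
    nlinarith

abbrev mComap {Ω 𝒳 : Type*} [MeasurableSpace 𝒳] (X : Ω → 𝒳) : MeasurableSpace Ω :=
  MeasurableSpace.comap X inferInstance

noncomputable def wAux {Ω 𝒳 : Type*} (X : Ω → 𝒳) (A Y Δc : Ω → ℝ)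
    (S : ℝ × 𝒳 × ℝ → ℝ) (γ β : ℝ) (ω : Ω) : ℝ :=
  β * γ - Δc ω * (β - Y ω) * (if Y ω ≤ β then (1 : ℝ) else 0) / S (Y ω, X ω, A ω)

noncomputable def ZAux {Ω 𝒳 : Type*} (X : Ω → 𝒳) (A Y Δc : Ω → ℝ)
    (S : ℝ × 𝒳 × ℝ → ℝ) (π : ℝ × 𝒳 → ℝ) (γ a β : ℝ) (ω : Ω) : ℝ :=
  wAux X A Y Δc S γ β ω * (if A ω = a then (1 : ℝ) else 0) / π (a, X ω)

/-- Theorem 2 of the paper: excess-risk bound for the CVaR criterion. If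
`(f̃, α̃)` maximizes the surrogate value `V'_L` over measurable `f` and `α ∈ ℝ`, then for
every measurable `f` and `α ∈ ℝ`, the supremum over measurable `f'` and `α' ∈ ℝ` of
`V'(sign ∘ f', α')`, minus `V'(sign ∘ f, α)`, is at most `V'_L(f̃, α̃) - V'_L(f, α)`;
equivalently, for all measurable `f'` and `α'`,
`V'(sign∘f', α') - V'(sign∘f, α) ≤ V'_L(f̃, α̃) - V'_L(f, α)`. -/
theorem stmt_8 {Ω 𝒳 : Type*} [MeasurableSpace Ω] [MeasurableSpace 𝒳]
    (P : Measure Ω) [IsProbabilityMeasure P]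
    (X : Ω → 𝒳) (hX : Measurable X)
    (A : Ω → ℝ) (hA : Measurable A) (hAval : ∀ ω, A ω = 1 ∨ A ω = -1)
    (Y : Ω → ℝ) (hY : Measurable Y)
    (h : ℝ) (hh : 0 < h) (hYb : ∀ᵐ ω ∂P, 0 ≤ Y ω ∧ Y ω ≤ h)
    (Δc : Ω → ℝ) (hΔm : Measurable Δc) (hΔval : ∀ ω, Δc ω = 0 ∨ Δc ω = 1)
    (π : ℝ × 𝒳 → ℝ) (hπ : Measurable π) (η : ℝ) (hη : 0 < η)
    (hπb : ∀ a x, η ≤ π (a, x) ∧ π (a, x) ≤ 1)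
    (hπver : ∀ a : ℝ, (a = 1 ∨ a = -1) →
      (fun ω => π (a, X ω)) =ᵐ[P]
        P[fun ω => if A ω = a then (1 : ℝ) else 0 |
          MeasurableSpace.comap X inferInstance])
    (S : ℝ × 𝒳 × ℝ → ℝ) (hS : Measurable S) (ηC : ℝ) (hηC : 0 < ηC)
    (hSb : ∀ t x a, ηC ≤ S (t, x, a) ∧ S (t, x, a) ≤ 1)
    (γ : ℝ) (hγ : γ ∈ Set.Ioo (0 : ℝ) 1)
    (δ : ℝ) (hδ : 0 < δ)
    (ftilde : 𝒳 → ℝ) (hftilde : Measurable ftilde) (αtilde : ℝ)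
    (hopt : ∀ f : 𝒳 → ℝ, Measurable f → ∀ α : ℝ,
      VLcvar P X A Y Δc S π γ δ f α ≤ VLcvar P X A Y Δc S π γ δ ftilde αtilde) :
    ∀ f : 𝒳 → ℝ, Measurable f → ∀ α : ℝ,
    ∀ f' : 𝒳 → ℝ, Measurable f' → ∀ α' : ℝ,
      Vcvar P X A Y Δc S π γ (fun x => sgn (f' x)) α'
          - Vcvar P X A Y Δc S π γ (fun x => sgn (f x)) α
        ≤ VLcvar P X A Y Δc S π γ δ ftilde αtilde - VLcvar P X A Y Δc S π γ δ f α := by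
  intro f hf α f' hf' α'
  classical
  have hγ0 : 0 < γ := hγ.1
  have hm : mComap X ≤ ‹MeasurableSpace Ω› := hX.comap_le
  -- measurability of the weight functions
  have hwmeas : ∀ β : ℝ, Measurable (wAux X A Y Δc S γ β) := by
    intro β
    unfold wAux
    have hind : Measurable fun ω => (if Y ω ≤ β then (1:ℝ) else 0) :=
      Measurable.ite (measurableSet_le hY measurable_const) measurable_const measurable_const
    exact measurable_const.sub (((hΔm.mul (measurable_const.sub hY)).mul hind).div
      (hS.comp (hY.prodMk (hX.prodMk hA))))
  have hZmeas : ∀ a β : ℝ, Measurable (ZAux X A Y Δc S π γ a β) := by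
    intro a β
    unfold ZAux
    have hind : Measurable fun ω => (if A ω = a then (1:ℝ) else 0) :=
      Measurable.ite (hA (measurableSet_singleton a)) measurable_const measurable_const
    exact ((hwmeas β).mul hind).div (hπ.comp (measurable_const.prodMk hX))
  -- a.e. bounds
  have hwbd : ∀ β : ℝ, ∀ᵐ ω ∂P, |wAux X A Y Δc S γ β ω| ≤ |β| * γ + |β| / ηC := by
    intro β
    filter_upwards [hYb] with ω hYω
    obtain ⟨hY0, _⟩ := hYω
    have hSo := hSb (Y ω) (X ω) (A ω)
    have hS0 : 0 < S (Y ω, X ω, A ω) := lt_of_lt_of_le hηC hSo.1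
    have hβ : β ≤ |β| := le_abs_self β
    have hβ0 : 0 ≤ |β| := abs_nonneg β
    have htb : 0 ≤ Δc ω * (β - Y ω) * (if Y ω ≤ β then (1:ℝ) else 0) / S (Y ω, X ω, A ω) ∧
        Δc ω * (β - Y ω) * (if Y ω ≤ β then (1:ℝ) else 0) / S (Y ω, X ω, A ω) ≤ |β| / ηC := by
      by_cases hle : Y ω ≤ β
      · rw [if_pos hle]
        have hc0 : 0 ≤ Δc ω * (β - Y ω) * 1 := by
          rcases hΔval ω with h0 | h0 <;> rw [h0] <;> nlinarith
        have hc1 : Δc ω * (β - Y ω) * 1 ≤ |β| := by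
          rcases hΔval ω with h0 | h0 <;> rw [h0] <;> nlinarith
        exact ⟨div_nonneg hc0 hS0.le, div_le_div₀ hβ0 hc1 hηC hSo.1⟩
      · rw [if_neg hle]
        constructor
        · simp
        · rw [mul_zero, zero_div]
          positivity
    have habs : |β * γ - Δc ω * (β - Y ω) * (if Y ω ≤ β then (1:ℝ) else 0) / S (Y ω, X ω, A ω)|
        ≤ |β * γ| + |Δc ω * (β - Y ω) * (if Y ω ≤ β then (1:ℝ) else 0) / S (Y ω, X ω, A ω)| :=
      abs_sub _ _
    rw [abs_of_nonneg htb.1] at habs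
    have hbg : |β * γ| = |β| * γ := by rw [abs_mul, abs_of_pos hγ0]
    rw [hbg] at habs
    unfold wAux
    linarith [htb.2]
  have hZbd : ∀ a β : ℝ, ∀ᵐ ω ∂P,
      ‖ZAux X A Y Δc S π γ a β ω‖ ≤ (|β| * γ + |β| / ηC) / η := by
    intro a β
    filter_upwards [hwbd β] with ω hw
    have hπo := hπb a (X ω)
    have hπ0 : 0 < π (a, X ω) := lt_of_lt_of_le hη hπo.1
    rw [Real.norm_eq_abs]
    unfold ZAux
    rw [abs_div, abs_of_pos hπ0, abs_mul]
    have hind : |(if A ω = a then (1:ℝ) else 0)| ≤ 1 := by split_ifs <;> norm_num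
    have hnum : |wAux X A Y Δc S γ β ω| * |(if A ω = a then (1:ℝ) else 0)|
        ≤ |β| * γ + |β| / ηC := by
      have h1 : |wAux X A Y Δc S γ β ω| * |(if A ω = a then (1:ℝ) else 0)|
          ≤ |wAux X A Y Δc S γ β ω| * 1 :=
        mul_le_mul_of_nonneg_left hind (abs_nonneg _)
      rw [mul_one] at h1
      linarith
    have hnn : 0 ≤ |β| * γ + |β| / ηC :=
      add_nonneg (mul_nonneg (abs_nonneg β) hγ0.le) (div_nonneg (abs_nonneg β) hηC.le)
    exact div_le_div₀ hnn hnum hη hπo.1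
  have hZint : ∀ a β : ℝ, Integrable (ZAux X A Y Δc S π γ a β) P := fun a β =>
    Integrable.mono' (integrable_const ((|β| * γ + |β| / ηC) / η))
      (hZmeas a β).aestronglyMeasurable (hZbd a β)
  -- the pull-out property of conditional expectation
  have hpull : ∀ (ψ Zf : Ω → ℝ), StronglyMeasurable[mComap X] ψ → (∀ ω, ‖ψ ω‖ ≤ 2) →
      Integrable Zf P →
      ∫ ω, ψ ω * Zf ω ∂P = ∫ ω, ψ ω * (P[Zf | mComap X]) ω ∂P := by
    intro ψ Zf hψ hψb hZf
    have hint : Integrable (fun ω => ψ ω * Zf ω) P :=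
      hZf.bdd_mul (hψ.mono hm).aestronglyMeasurable (Filter.Eventually.of_forall hψb)
    calc ∫ ω, ψ ω * Zf ω ∂P = ∫ ω, (P[fun ω => ψ ω * Zf ω | mComap X]) ω ∂P :=
          (integral_condExp hm).symm
      _ = ∫ ω, ψ ω * (P[Zf | mComap X]) ω ∂P := by
          refine integral_congr_ae ?_
          filter_upwards [condExp_mul_of_stronglyMeasurable_left hψ hint hZf] with ω hω
          exact hω
  have hsm : ∀ (χ : 𝒳 → ℝ), Measurable χ → StronglyMeasurable[mComap X] fun ω => χ (X ω) :=
    fun χ hχ => (hχ.comp (comap_measurable X)).stronglyMeasurable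
  -- integrability of bounded multiples
  have hKbddint : ∀ (χ : 𝒳 → ℝ), Measurable χ → (∀ x, ‖χ x‖ ≤ 2) →
      ∀ (g : Ω → ℝ), Integrable g P → Integrable (fun ω => χ (X ω) * g ω) P :=
    fun χ hχ hb g hg =>
      hg.bdd_mul (hχ.comp hX).aestronglyMeasurable (Filter.Eventually.of_forall fun ω => hb (X ω))
  -- replacing Z by its conditional expectation inside integrals
  have hrepK : ∀ (χ1 χ2 : 𝒳 → ℝ), Measurable χ1 → Measurable χ2 →
      (∀ x, ‖χ1 x‖ ≤ 2) → (∀ x, ‖χ2 x‖ ≤ 2) → ∀ β : ℝ,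
      ∫ ω, (χ1 (X ω) * ZAux X A Y Δc S π γ 1 β ω
          + χ2 (X ω) * ZAux X A Y Δc S π γ (-1) β ω) ∂P
        = ∫ ω, (χ1 (X ω) * (P[ZAux X A Y Δc S π γ 1 β | mComap X]) ω
          + χ2 (X ω) * (P[ZAux X A Y Δc S π γ (-1) β | mComap X]) ω) ∂P := by
    intro χ1 χ2 hχ1 hχ2 hb1 hb2 β
    have hi1 := hKbddint χ1 hχ1 hb1 _ (hZint 1 β)
    have hi2 := hKbddint χ2 hχ2 hb2 _ (hZint (-1) β)
    have hi1' := hKbddint χ1 hχ1 hb1 _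
      (integrable_condExp : Integrable (P[ZAux X A Y Δc S π γ 1 β | mComap X]) P)
    have hi2' := hKbddint χ2 hχ2 hb2 _
      (integrable_condExp : Integrable (P[ZAux X A Y Δc S π γ (-1) β | mComap X]) P)
    rw [integral_add hi1 hi2, integral_add hi1' hi2',
      hpull (fun ω => χ1 (X ω)) _ (hsm χ1 hχ1) (fun ω => hb1 (X ω)) (hZint 1 β),
      hpull (fun ω => χ2 (X ω)) _ (hsm χ2 hχ2) (fun ω => hb2 (X ω)) (hZint (-1) β)]
  -- pointwise rewriting of Vcvar
  have hVeq : ∀ (d : 𝒳 → ℝ), (∀ x, d x = 1 ∨ d x = -1) → ∀ β : ℝ,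
      Vcvar P X A Y Δc S π γ d β
        = ∫ ω, ((if d (X ω) = 1 then (1:ℝ) else 0) * ZAux X A Y Δc S π γ 1 β ω
            + (if d (X ω) = -1 then (1:ℝ) else 0) * ZAux X A Y Δc S π γ (-1) β ω) ∂P := by
    intro d hdv β
    unfold Vcvar ZAux wAux
    refine integral_congr_ae (Filter.Eventually.of_forall fun ω => ?_)
    dsimp only
    rcases hAval ω with h1 | h1 <;> rcases hdv (X ω) with h2 | h2 <;>
      rw [h1, h2] <;> norm_num
  -- pointwise rewriting of VLcvar
  have hVLeq : ∀ (g : 𝒳 → ℝ), ∀ β : ℝ,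
      VLcvar P X A Y Δc S π γ δ g β
        = ∫ ω, (rampL δ (g (X ω)) * ZAux X A Y Δc S π γ 1 β ω
            + rampL δ (-(g (X ω))) * ZAux X A Y Δc S π γ (-1) β ω) ∂P := by
    intro g β
    unfold VLcvar ZAux wAux
    refine integral_congr_ae (Filter.Eventually.of_forall fun ω => ?_)
    dsimp only
    rcases hAval ω with h1 | h1 <;> rw [h1] <;> norm_num <;> ring
  have hVeqK : ∀ (d : 𝒳 → ℝ), Measurable d → (∀ x, d x = 1 ∨ d x = -1) → ∀ β : ℝ,
      Vcvar P X A Y Δc S π γ d β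
        = ∫ ω, ((if d (X ω) = 1 then (1:ℝ) else 0) * (P[ZAux X A Y Δc S π γ 1 β | mComap X]) ω
            + (if d (X ω) = -1 then (1:ℝ) else 0)
              * (P[ZAux X A Y Δc S π γ (-1) β | mComap X]) ω) ∂P := by
    intro d hd hdv β
    have hm1 : Measurable fun x => if d x = 1 then (1:ℝ) else 0 :=
      Measurable.ite (hd (measurableSet_singleton 1)) measurable_const measurable_const
    have hm2 : Measurable fun x => if d x = -1 then (1:ℝ) else 0 :=
      Measurable.ite (hd (measurableSet_singleton (-1))) measurable_const measurable_const
    have hb1 : ∀ x, ‖if d x = 1 then (1:ℝ) else 0‖ ≤ 2 := by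
      intro x; split_ifs <;> norm_num
    have hb2 : ∀ x, ‖if d x = -1 then (1:ℝ) else 0‖ ≤ 2 := by
      intro x; split_ifs <;> norm_num
    exact (hVeq d hdv β).trans (hrepK _ _ hm1 hm2 hb1 hb2 β)
  have hrampb : ∀ u : ℝ, ‖rampL δ u‖ ≤ 2 := by
    intro u
    rw [Real.norm_eq_abs, abs_of_nonneg (rampL_nonneg hδ u)]
    exact rampL_le_two hδ u
  have hVLeqK : ∀ (g : 𝒳 → ℝ), Measurable g → ∀ β : ℝ,
      VLcvar P X A Y Δc S π γ δ g β
        = ∫ ω, (rampL δ (g (X ω)) * (P[ZAux X A Y Δc S π γ 1 β | mComap X]) ω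
            + rampL δ (-(g (X ω))) * (P[ZAux X A Y Δc S π γ (-1) β | mComap X]) ω) ∂P := by
    intro g hg β
    exact (hVLeq g β).trans (hrepK (fun x => rampL δ (g x)) (fun x => rampL δ (-(g x)))
      (measurable_rampL.comp hg) (measurable_rampL.comp hg.neg)
      (fun x => hrampb _) (fun x => hrampb _) β)
  -- the integrated maximum
  set Mv : ℝ → ℝ := fun β => ∫ ω, max ((P[ZAux X A Y Δc S π γ 1 β | mComap X]) ω)
      ((P[ZAux X A Y Δc S π γ (-1) β | mComap X]) ω) ∂P with hMv
  have hMint : ∀ β : ℝ, Integrable (fun ω => max ((P[ZAux X A Y Δc S π γ 1 β | mComap X]) ω)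
      ((P[ZAux X A Y Δc S π γ (-1) β | mComap X]) ω)) P := by
    intro β
    have h := (integrable_condExp : Integrable (P[ZAux X A Y Δc S π γ 1 β | mComap X]) P).sup
      (integrable_condExp : Integrable (P[ZAux X A Y Δc S π γ (-1) β | mComap X]) P)
    exact h
  -- every decision rule is dominated by the integrated maximum
  have hVle : ∀ (d : 𝒳 → ℝ), Measurable d → (∀ x, d x = 1 ∨ d x = -1) → ∀ β : ℝ,
      Vcvar P X A Y Δc S π γ d β ≤ Mv β := by
    intro d hd hdv β
    rw [hVeqK d hd hdv β, hMv]
    refine integral_mono ?_ (hMint β) ?_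
    · refine Integrable.add ?_ ?_
      · exact hKbddint _ (Measurable.ite (hd (measurableSet_singleton 1)) measurable_const
          measurable_const) (fun x => by split_ifs <;> norm_num) _ integrable_condExp
      · exact hKbddint _ (Measurable.ite (hd (measurableSet_singleton (-1))) measurable_const
          measurable_const) (fun x => by split_ifs <;> norm_num) _ integrable_condExp
    · intro ω
      dsimp only
      rcases hdv (X ω) with h2 | h2
      · rw [h2]
        norm_num
      · rw [h2]
        norm_num
  -- the integrated maximum is attained (times two, for the surrogate)
  have hVach : ∀ β : ℝ, 2 * Mv β ≤ VLcvar P X A Y Δc S π γ δ ftilde αtilde := by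
    intro β
    have hKm1 : Measurable[mComap X] (P[ZAux X A Y Δc S π γ 1 β | mComap X]) :=
      stronglyMeasurable_condExp.measurable
    have hKm2 : Measurable[mComap X] (P[ZAux X A Y Δc S π γ (-1) β | mComap X]) :=
      stronglyMeasurable_condExp.measurable
    have hsetm : MeasurableSet[mComap X]
        {ω | (P[ZAux X A Y Δc S π γ (-1) β | mComap X]) ω ≤ (P[ZAux X A Y Δc S π γ 1 β | mComap X]) ω} :=
      measurableSet_le hKm2 hKm1
    obtain ⟨B, hB, hXB⟩ := MeasurableSpace.measurableSet_comap.mp hsetm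
    set d : 𝒳 → ℝ := fun x => if x ∈ B then (1:ℝ) else -1 with hd_def
    have hdm : Measurable d := Measurable.ite hB measurable_const measurable_const
    have hdv : ∀ x, d x = 1 ∨ d x = -1 := by
      intro x; by_cases hx : x ∈ B <;> simp [hd_def, hx]
    have hmem : ∀ ω, X ω ∈ B ↔
        (P[ZAux X A Y Δc S π γ (-1) β | mComap X]) ω ≤ (P[ZAux X A Y Δc S π γ 1 β | mComap X]) ω := by
      intro ω
      constructor
      · intro hx
        have hx' : ω ∈ X ⁻¹' B := hx
        rw [hXB] at hx'
        exact hx'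
      · intro hle
        have hx' : ω ∈ X ⁻¹' B := by rw [hXB]; exact hle
        exact hx'
    have hVd : Vcvar P X A Y Δc S π γ d β = Mv β := by
      rw [hVeqK d hdm hdv β, hMv]
      refine integral_congr_ae (Filter.Eventually.of_forall fun ω => ?_)
      dsimp only
      by_cases hx : X ω ∈ B
      · have hle := (hmem ω).1 hx
        have hd1 : d (X ω) = 1 := if_pos hx
        rw [hd1, max_eq_left hle]
        norm_num
      · have hgt : ¬ ((P[ZAux X A Y Δc S π γ (-1) β | mComap X]) ω
            ≤ (P[ZAux X A Y Δc S π γ 1 β | mComap X]) ω) := fun hc => hx ((hmem ω).2 hc)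
        have hd1 : d (X ω) = -1 := if_neg hx
        rw [hd1, max_eq_right (not_le.1 hgt).le]
        norm_num
    have hVLd : VLcvar P X A Y Δc S π γ δ (fun x => δ * d x) β
        = 2 * Vcvar P X A Y Δc S π γ d β := by
      unfold VLcvar Vcvar
      rw [← integral_const_mul]
      refine integral_congr_ae (Filter.Eventually.of_forall fun ω => ?_)
      dsimp only
      rcases hAval ω with h1 | h1 <;> rcases hdv (X ω) with h2 | h2 <;> rw [h1, h2]
      · rw [show (1:ℝ) * (δ * 1) = δ by ring, rampL_of_ge hδ le_rfl]
        norm_num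
        ring
      · rw [show (1:ℝ) * (δ * -1) = -δ by ring, rampL_of_le le_rfl]
        norm_num
      · rw [show (-1:ℝ) * (δ * 1) = -δ by ring, rampL_of_le le_rfl]
        norm_num
      · rw [show (-1:ℝ) * (δ * -1) = δ by ring, rampL_of_ge hδ le_rfl]
        norm_num
        ring
    have hle := hopt (fun x => δ * d x) (measurable_const.mul hdm) β
    rw [hVLd, hVd] at hle
    exact hle
  -- comparison of surrogate and true value at (f, α)
  have hcomp : VLcvar P X A Y Δc S π γ δ f α
      - Vcvar P X A Y Δc S π γ (fun x => sgn (f x)) α ≤ Mv α := by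
    have hi1 : Integrable (fun ω => rampL δ (f (X ω))
        * (P[ZAux X A Y Δc S π γ 1 α | mComap X]) ω
        + rampL δ (-(f (X ω))) * (P[ZAux X A Y Δc S π γ (-1) α | mComap X]) ω) P :=
      Integrable.add
        (hKbddint _ (measurable_rampL.comp hf) (fun x => hrampb _) _ integrable_condExp)
        (hKbddint _ (measurable_rampL.comp hf.neg) (fun x => hrampb _) _ integrable_condExp)
    have hi2 : Integrable (fun ω => (if sgn (f (X ω)) = 1 then (1:ℝ) else 0)
        * (P[ZAux X A Y Δc S π γ 1 α | mComap X]) ω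
        + (if sgn (f (X ω)) = -1 then (1:ℝ) else 0)
        * (P[ZAux X A Y Δc S π γ (-1) α | mComap X]) ω) P :=
      Integrable.add
        (hKbddint _ (Measurable.ite ((measurable_sgn.comp hf) (measurableSet_singleton 1))
            measurable_const measurable_const) (fun x => by split_ifs <;> norm_num)
          _ integrable_condExp)
        (hKbddint _ (Measurable.ite ((measurable_sgn.comp hf) (measurableSet_singleton (-1)))
            measurable_const measurable_const) (fun x => by split_ifs <;> norm_num)
          _ integrable_condExp)
    rw [hVLeqK f hf α, hVeqK (fun x => sgn (f x)) (measurable_sgn.comp hf)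
      (fun x => sgn_cases (f x)) α, hMv, ← integral_sub hi1 hi2]
    refine integral_mono (hi1.sub hi2) (hMint α) fun ω => ?_
    exact key_ineq hδ (f (X ω)) _ _
  -- conclusion
  have h1 : Vcvar P X A Y Δc S π γ (fun x => sgn (f' x)) α' ≤ Mv α' :=
    hVle _ (measurable_sgn.comp hf') (fun x => sgn_cases (f' x)) α'
  have h3 : Mv α + Mv α' ≤ VLcvar P X A Y Δc S π γ δ ftilde αtilde := by
    rcases le_total (Mv α) (Mv α') with hc | hc
    · linarith [hVach α']
    · linarith [hVach α]
  linarith
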